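/- Cone Lemma: Let Σ be a simplicial complex with cone vΣ over a new vertex v, giving a homomorphism i_v: K[Σ] → K[vΣ]. Let M_{vΣ} ⊆ K[vΣ]^1 be a linear subspace such that the coefficient functional e_v: M_{vΣ} → K is surjective, and set M_Σ = i_v^{-1}(M_{vΣ}). Then i_v induces a graded ring isomorphism K[Σ]/(M_Σ) ≅ K[vΣ]/(M_{vΣ}). -/

import Mathlib

open MvPolynomial

set_option synthInstance.maxHeartbeats 1000000
set_option maxHeartbeats 1000000

/-- A simplicial complex on a vertex type `V`: a nonempty, downward closed
collection of finite subsets of `V`. -/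
structure SComplex (V : Type*) [DecidableEq V] where
  faces : Finset (Finset V)
  nonempty : faces.Nonempty
  down_closed : ∀ σ ∈ faces, ∀ τ ⊆ σ, τ ∈ faces

namespace SComplex

variable {V : Type*} [DecidableEq V]

theorem empty_mem (Δ : SComplex V) : (∅ : Finset V) ∈ Δ.faces := by
  obtain ⟨σ, hσ⟩ := Δ.nonempty
  exact Δ.down_closed σ hσ ∅ (Finset.empty_subset σ)

/-- The Stanley–Reisner ideal of a simplicial complex: generated by the
squarefree monomials `x_S` for non-faces `S`. -/
noncomputable def SRideal (K : Type*) [Field K] (Δ : SComplex V) : Ideal (MvPolynomial V K) :=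
  Ideal.span { p | ∃ S : Finset V, S ∉ Δ.faces ∧ p = ∏ v ∈ S, X v }

/-- The set of `d`-element faces ("facets" of a `(d-1)`-dimensional complex). -/
def facets (Δ : SComplex V) (d : ℕ) : Finset (Finset V) :=
  Δ.faces.filter fun σ => σ.card = d

/-- Purity: every face is contained in a `d`-element face. -/
def Pure (Δ : SComplex V) (d : ℕ) : Prop :=
  ∀ σ ∈ Δ.faces, ∃ τ ∈ Δ.faces, σ ⊆ τ ∧ τ.card = d

/-- Two facets are adjacent if they share a `(d-1)`-element face. -/
def Adj (Δ : SComplex V) (d : ℕ) (σ σ' : Finset V) : Prop :=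
  σ ∈ facets Δ d ∧ σ' ∈ facets Δ d ∧ (σ ∩ σ').card = d - 1

/-- Strong connectivity: any two facets are joined by a face path. -/
def StronglyConnected (Δ : SComplex V) (d : ℕ) : Prop :=
  ∀ σ ∈ facets Δ d, ∀ σ' ∈ facets Δ d, Relation.ReflTransGen (Adj Δ d) σ σ'

/-- A `(d-1)`-dimensional pseudomanifold (without boundary): pure, every
`(d-2)`-face lies in exactly two facets, and strongly connected. -/
def IsPseudomanifold (Δ : SComplex V) (d : ℕ) : Prop :=
  Pure Δ d ∧
  (∀ τ ∈ Δ.faces, τ.card = d - 1 → ((facets Δ d).filter fun σ => τ ⊆ σ).card = 2) ∧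
  StronglyConnected Δ d

/-- The link of a face. -/
def link (Δ : SComplex V) (τ : Finset V) (h : τ ∈ Δ.faces) : SComplex V where
  faces := Δ.faces.filter fun σ => Disjoint σ τ ∧ σ ∪ τ ∈ Δ.faces
  nonempty := ⟨∅, by
    simp only [Finset.mem_filter]
    exact ⟨Δ.empty_mem, Finset.disjoint_empty_left τ, by simpa using h⟩⟩
  down_closed := by
    intro σ hσ ρ hρ
    simp only [Finset.mem_filter] at hσ ⊢
    exact ⟨Δ.down_closed σ hσ.1 ρ hρ, hσ.2.1.mono_left hρ,
      Δ.down_closed _ hσ.2.2 _ (Finset.union_subset_union hρ le_rfl)⟩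

/-- Graph connectivity of a complex: there is a vertex and any two vertices
are joined by an edge path. -/
def Connected (Δ : SComplex V) : Prop :=
  (∃ v, {v} ∈ Δ.faces) ∧
  ∀ u w : V, {u} ∈ Δ.faces → {w} ∈ Δ.faces →
    Relation.ReflTransGen (fun x y => ({x, y} : Finset V) ∈ Δ.faces) u w

/-- A normal pseudomanifold: a pseudomanifold all of whose links of faces of
codimension at least two are connected. -/
def IsNormalPM (Δ : SComplex V) (d : ℕ) : Prop :=
  IsPseudomanifold Δ d ∧
  ∀ τ (h : τ ∈ Δ.faces), τ.card + 2 ≤ d → Connected (Δ.link τ h)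

/-- The star of a vertex, as a simplicial complex (on the same ambient
vertex type). -/
def starComplex (Δ : SComplex V) (v : V) (hv : {v} ∈ Δ.faces) : SComplex V where
  faces := Δ.faces.filter fun τ => insert v τ ∈ Δ.faces
  nonempty := ⟨∅, by
    simp only [Finset.mem_filter]
    exact ⟨Δ.empty_mem, by simpa using hv⟩⟩
  down_closed := by
    intro σ hσ ρ hρ
    simp only [Finset.mem_filter] at hσ ⊢
    exact ⟨Δ.down_closed σ hσ.1 ρ hρ,
      Δ.down_closed _ hσ.2 _ (Finset.insert_subset_insert v hρ)⟩

end SComplex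

section Chains

variable {V : Type*} [DecidableEq V] [Fintype V] [LinearOrder V]
variable (K : Type*) [Field K]

/-- `m`-dimensional chains: functions on faces with `m` elements. -/
def chainsp (Δ : SComplex V) (m : ℕ) : Type _ :=
  {σ : Finset V // σ ∈ Δ.faces ∧ σ.card = m} → K

noncomputable instance (Δ : SComplex V) (m : ℕ) : AddCommGroup (chainsp K Δ m) :=
  Pi.addCommGroup

noncomputable instance (Δ : SComplex V) (m : ℕ) : Module K (chainsp K Δ m) :=
  Pi.module _ _ _

/-- The simplicial boundary map of the (augmented) chain complex, using the
orderings induced by the linear order on `V` and the usual incidence signs. -/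
noncomputable def bdry (Δ : SComplex V) (m : ℕ) :
    chainsp K Δ (m + 1) →ₗ[K] chainsp K Δ m where
  toFun f τ := ∑ v : V,
    if h : v ∉ τ.1 ∧ insert v τ.1 ∈ Δ.faces then
      (-1 : K) ^ ((insert v τ.1).filter fun u => u < v).card *
        f ⟨insert v τ.1, h.2, by rw [Finset.card_insert_of_notMem h.1, τ.2.2]⟩
    else 0
  map_add' f g := by
    funext τ
    show _ = (_ : K) + _
    rw [← Finset.sum_add_distrib]
    refine Finset.sum_congr rfl fun v _ => ?_
    split
    · show _ * ((f _ : K) + g _) = _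
      ring
    · simp
  map_smul' c f := by
    funext τ
    show _ = c * _
    rw [Finset.mul_sum]
    refine Finset.sum_congr rfl fun v _ => ?_
    split
    · show _ * (c * (f _ : K)) = _
      ring
    · simp

/-- The cycles in degree `m` (everything in degree `0`, which is the span of
the empty face in the augmented complex). -/
noncomputable def kerAt (Δ : SComplex V) :
    (m : ℕ) → Submodule K (chainsp K Δ m)
  | 0 => ⊤
  | m + 1 => LinearMap.ker (bdry K Δ m)

/-- The complex has the reduced `K`-homology of an `(n-1)`-dimensional sphere:
it is at most `(n-1)`-dimensional, reduced homology vanishes below the top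
degree, and the top reduced homology is one-dimensional. -/
def HomologySphereShape (Δ : SComplex V) (n : ℕ) : Prop :=
  (∀ σ ∈ Δ.faces, σ.card ≤ n) ∧
  (∀ m < n, kerAt K Δ m = LinearMap.range (bdry K Δ m)) ∧
  Module.finrank K (kerAt K Δ n) =
    Module.finrank K (LinearMap.range (bdry K Δ n)) + 1

/-- A `K`-homology sphere of dimension `d-1`: the complex and all links of
its nonempty faces have the reduced `K`-homology of spheres of the
appropriate dimensions. -/
def IsKHomologySphere (Δ : SComplex V) (d : ℕ) : Prop :=
  HomologySphereShape K Δ d ∧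
  ∀ τ (h : τ ∈ Δ.faces), τ.Nonempty →
    HomologySphereShape K (Δ.link τ h) (d - τ.card)

end Chains

section Linear

variable {V : Type*} [DecidableEq V]
variable (K : Type*) [Field K]

/-- The coefficient of `x_v`, as a linear functional on polynomials. -/
noncomputable def coeffLin (v : V) : MvPolynomial V K →ₗ[K] K where
  toFun p := coeff (Finsupp.single v 1) p
  map_add' p q := coeff_add _ p q
  map_smul' c p := coeff_smul _ c p

/-- `M` is a linearly generic `n`-dimensional subspace of the degree one part:
any at most `n` vertices have linearly independent images in `M^∨`. -/
def LinGenericM [Fintype V] (n : ℕ) (M : Submodule K (MvPolynomial V K)) : Prop :=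
  M ≤ Submodule.span K (Set.range (X : V → MvPolynomial V K)) ∧
  Module.finrank K M = n ∧
  ∀ S : Finset V, S.card ≤ n →
    LinearIndependent K fun v : ↥S => ((coeffLin K v.1).comp M.subtype)

set_option synthInstance.maxHeartbeats 1000000 in
/-- A regular parameter space: an `n`-dimensional subspace of the degree one
part containing a length `n` regular sequence for the Stanley–Reisner ring. -/
def RegularParamSpace [Fintype V] (Δ : SComplex V) (n : ℕ)
    (M : Submodule K (MvPolynomial V K)) : Prop :=
  M ≤ Submodule.span K (Set.range (X : V → MvPolynomial V K)) ∧
  Module.finrank K M = n ∧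
  ∃ ℓ : Fin n → MvPolynomial V K, (∀ i, ℓ i ∈ M) ∧
    RingTheory.Sequence.IsRegular (MvPolynomial V K ⧸ SComplex.SRideal K Δ)
      (List.ofFn fun i => Ideal.Quotient.mk (SComplex.SRideal K Δ) (ℓ i))

/-- Linear genericity of a system of coordinates `a : V → K^d`: the images of
any at most `d` vertices are linearly independent. -/
def LinGeneric [Fintype V] (d : ℕ) (a : V → Fin d → K) : Prop :=
  ∀ S : Finset V, S.card ≤ d → LinearIndependent K fun v : ↥S => a v.1

end Linear
section Cone

variable {V : Type*} [DecidableEq V]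

namespace SComplex

/-- The cone over a complex, with apex the new vertex `none`. -/
def coneC (Δ : SComplex V) : SComplex (Option V) where
  faces := (Δ.faces.image (Finset.image some)) ∪
    (Δ.faces.image fun σ => insert none (σ.image some))
  nonempty := ⟨∅, by
    simp only [Finset.mem_union, Finset.mem_image]
    exact Or.inl ⟨∅, Δ.empty_mem, rfl⟩⟩
  down_closed := by
    intro σ hσ ρ hρ
    simp only [Finset.mem_union, Finset.mem_image] at hσ ⊢
    have key : ∃ τ ∈ Δ.faces, ρ.erase none = τ.image some := by
      obtain ⟨τ₀, hτ₀, rfl⟩ | ⟨τ₀, hτ₀, rfl⟩ := hσ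
      · have : ρ.erase none ⊆ τ₀.image some :=
          (Finset.erase_subset none ρ).trans hρ
        obtain ⟨τ, hττ, hτ⟩ := Finset.subset_image_iff.mp this
        exact ⟨τ, Δ.down_closed τ₀ hτ₀ τ hττ, hτ.symm⟩
      · have : ρ.erase none ⊆ τ₀.image some := by
          intro x hx
          rcases Finset.mem_erase.mp hx with ⟨hx1, hx2⟩
          rcases Finset.mem_insert.mp (hρ hx2) with h | h
          · exact absurd h hx1
          · exact h
        obtain ⟨τ, hττ, hτ⟩ := Finset.subset_image_iff.mp this
        exact ⟨τ, Δ.down_closed τ₀ hτ₀ τ hττ, hτ.symm⟩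
    obtain ⟨τ, hτ, hρτ⟩ := key
    by_cases hn : none ∈ ρ
    · refine Or.inr ⟨τ, hτ, ?_⟩
      rw [← hρτ, Finset.insert_erase hn]
    · refine Or.inl ⟨τ, hτ, ?_⟩
      rw [← hρτ, Finset.erase_eq_self.mpr hn]

/-- The suspension of a complex on `V`, with poles `Sum.inr true` and
`Sum.inr false`: faces are the sets whose `V`-part is a face and which do not
contain both poles. -/
def susp [Fintype V] (Δ : SComplex V) : SComplex (V ⊕ Bool) where
  faces := Finset.univ.filter fun σ : Finset (V ⊕ Bool) =>
    σ.toLeft ∈ Δ.faces ∧ ¬(Sum.inr true ∈ σ ∧ Sum.inr false ∈ σ)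
  nonempty := ⟨∅, by
    simp only [Finset.mem_filter, Finset.mem_univ, true_and]
    exact ⟨by
      rw [show (∅ : Finset (V ⊕ Bool)).toLeft = ∅ from by ext; simp [Finset.mem_toLeft]]
      exact Δ.empty_mem, by simp⟩⟩
  down_closed := by
    intro σ hσ ρ hρ
    simp only [Finset.mem_filter, Finset.mem_univ, true_and] at hσ ⊢
    constructor
    · refine Δ.down_closed _ hσ.1 _ ?_
      intro x hx
      rw [Finset.mem_toLeft] at hx ⊢
      exact hρ hx
    · intro ⟨h1, h2⟩
      exact hσ.2 ⟨hρ h1, hρ h2⟩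

end SComplex

end Cone

section Orientation

variable {V : Type*} [DecidableEq V] [LinearOrder V]
variable (K : Type*) [Field K]

/-- The incidence sign of a vertex in a face, relative to the sorted order. -/
def incSign (σ : Finset V) (v : V) : ℤ :=
  (-1) ^ (σ.filter fun u => u < v).card

/-- An orientation of a `(d-1)`-dimensional pseudomanifold: a choice of sign
for each facet such that the two facets containing any `(d-2)`-face induce
opposite orientations on it. -/
def IsOrientation (Δ : SComplex V) (d : ℕ) (ε : Finset V → ℤ) : Prop :=
  (∀ σ ∈ SComplex.facets Δ d, ε σ = 1 ∨ ε σ = -1) ∧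
  ∀ τ ∈ Δ.faces, τ.card = d - 1 →
    ∀ σ₁ ∈ SComplex.facets Δ d, ∀ σ₂ ∈ SComplex.facets Δ d, σ₁ ≠ σ₂ →
      τ ⊆ σ₁ → τ ⊆ σ₂ → ∀ v₁ ∈ σ₁ \ τ, ∀ v₂ ∈ σ₂ \ τ,
        ε σ₁ * incSign σ₁ v₁ = -(ε σ₂ * incSign σ₂ v₂)

/-- The oriented determinant `[σ]` of a facet: the determinant of the matrix
of coordinates of its vertices (listed in increasing order), multiplied by
the orientation sign. -/
noncomputable def obrack (d : ℕ) (ε : Finset V → ℤ) (a : V → Fin d → K)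
    (σ : Finset V) : K :=
  if h : σ.card = d then
    (ε σ : K) * Matrix.det (Matrix.of fun i j : Fin d => a (σ.orderIsoOfFin h j) i)
  else 0

/-- The linear form `[σ_v]`, as a polynomial in the coordinates on `N`:
the determinant of the coordinate matrix of `σ` with the column of `v`
replaced by the variable vector, multiplied by the orientation sign. -/
noncomputable def obrackVar (d : ℕ) (ε : Finset V → ℤ) (a : V → Fin d → K)
    (σ : Finset V) (v : V) : MvPolynomial (Fin d) K :=
  if h : σ.card = d then
    (ε σ : MvPolynomial (Fin d) K) *
      Matrix.det (Matrix.of fun i j : Fin d =>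
        if (σ.orderIsoOfFin h j : V) = v then X i
        else C (a (σ.orderIsoOfFin h j) i))
  else 0

variable (d : ℕ) (ε : Finset V → ℤ) (a : V → Fin d → K)

/-- The field of rational functions on `N`. -/
abbrev RatFun := FractionRing (MvPolynomial (Fin d) K)

/-- Polynomials on `N` as rational functions. -/
noncomputable def toF : MvPolynomial (Fin d) K →+* RatFun K d :=
  algebraMap (MvPolynomial (Fin d) K) (RatFun K d)

/-- Restriction of an element of the Stanley–Reisner polynomial ring to (the
span of) a facet `σ`, via the Courant functions `Ψ_v = [σ_v]/[σ]`. -/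
noncomputable def restrictF (σ : Finset V) (f : MvPolynomial V K) : RatFun K d :=
  MvPolynomial.eval₂ ((toF K d).comp (C : K →+* MvPolynomial (Fin d) K))
    (fun v => toF K d (obrackVar K d ε a σ v) / toF K d (C (obrack K d ε a σ))) f

/-- The term of the degree map attached to a facet `σ` with value `g` on `σ`:
`g/(χ_σ [σ]) = g·[σ]^{d-1}/∏_{v ∈ σ}[σ_v]`. -/
noncomputable def volTerm (σ : Finset V) (g : MvPolynomial (Fin d) K) : RatFun K d :=
  toF K d g * toF K d (C (obrack K d ε a σ)) ^ (d - 1) /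
    ∏ v ∈ σ, toF K d (obrackVar K d ε a σ v)

/-- The degree map on piecewise polynomials `(g σ)_σ`. -/
noncomputable def VolPP (Δ : SComplex V) (g : Finset V → MvPolynomial (Fin d) K) :
    RatFun K d :=
  ∑ σ ∈ SComplex.facets Δ d, volTerm K d ε a σ (g σ)

/-- The degree map on the Stanley–Reisner polynomial ring. -/
noncomputable def VolSR (Δ : SComplex V) (f : MvPolynomial V K) : RatFun K d :=
  ∑ σ ∈ SComplex.facets Δ d, restrictF K d ε a σ f * toF K d (C (obrack K d ε a σ)) ^ (d - 1) /
    ∏ v ∈ σ, toF K d (obrackVar K d ε a σ v)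

end Orientation

section Deriv

variable {k K : Type*} [CommRing k] [CommRing K] [Algebra k K]

/-- The composite of a finite family of derivations, as a map. -/
def compApply {m : ℕ} (D : Fin m → Derivation k K K) : K → K :=
  (List.ofFn fun j => ⇑(D j)).foldr Function.comp id

end Deriv
section Generic

/-- The field `k(a_x : x ∈ I)` of rational functions over `k` in
indeterminates indexed by `I`. -/
abbrev GField (k : Type*) [Field k] (I : Type*) : Type _ :=
  FractionRing (MvPolynomial I k)

/-- The indeterminate `a_x` as an element of `k(a)`. -/
noncomputable def gen (k : Type*) [Field k] {I : Type*} (x : I) : GField k I :=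
  algebraMap (MvPolynomial I k) (GField k I) (X x)

/-- The generic coordinates `a_{vi}` of the vertices. -/
noncomputable def genCoord (k : Type*) [Field k] (V : Type*) (d : ℕ) (v : V)
    (i : Fin d) : GField k (V × Fin d) := gen k (v, i)

/-- The generic linear system of parameters `ℓ_i = Σ_v a_{vi} x_v`. -/
noncomputable def genL (k : Type*) [Field k] (V : Type*) [Fintype V] (d : ℕ)
    (i : Fin d) : MvPolynomial V (GField k (V × Fin d)) :=
  ∑ v : V, C (genCoord k V d v i) * X v

/-- The ideal `I_Σ + (ℓ_1,…,ℓ_d)` defining the Artinian reduction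
`A^*(Σ)` for the generic parameter space. -/
noncomputable def genJ (k : Type*) [Field k] {V : Type*} [DecidableEq V]
    [Fintype V] (d : ℕ) (Δ : SComplex V) :
    Ideal (MvPolynomial V (GField k (V × Fin d))) :=
  SComplex.SRideal _ Δ ⊔ Ideal.span (Set.range (genL k V d))

end Generic


section ConeAux

variable {V : Type*} [DecidableEq V] {K : Type*} [Field K]

open SComplex

lemma coneC_image_mem (Δ : SComplex V) {T : Finset V} (hT : T ∈ Δ.faces) :
    T.image some ∈ Δ.coneC.faces := by
  simp only [coneC, Finset.mem_union, Finset.mem_image]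
  exact Or.inl ⟨T, hT, rfl⟩

lemma coneC_insert_none_mem (Δ : SComplex V) {T : Finset V} (hT : T ∈ Δ.faces) :
    insert none (T.image some) ∈ Δ.coneC.faces := by
  simp only [coneC, Finset.mem_union, Finset.mem_image]
  exact Or.inr ⟨T, hT, rfl⟩

lemma mem_of_coneC_image (Δ : SComplex V) {T : Finset V}
    (h : T.image some ∈ Δ.coneC.faces) : T ∈ Δ.faces := by
  simp only [coneC, Finset.mem_union, Finset.mem_image] at h
  rcases h with ⟨τ, hτ, hτ2⟩ | ⟨τ, hτ, hτ2⟩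
  · rwa [← Finset.image_injective (Option.some_injective V) hτ2]
  · exfalso
    have : (none : Option V) ∈ T.image some := by
      rw [← hτ2]; exact Finset.mem_insert_self _ _
    simp at this

lemma exists_image_of_none_not_mem {S : Finset (Option V)} (h : none ∉ S) :
    ∃ T : Finset V, T.image some = S := by
  classical
  refine ⟨S.preimage some (Option.some_injective V).injOn, ?_⟩
  rw [Finset.image_preimage]
  refine Finset.filter_true_of_mem ?_
  intro x hx
  cases x with
  | none => exact absurd hx h
  | some v => exact ⟨v, rfl⟩

noncomputable def killNone (K : Type*) [Field K] (V : Type*) :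
    MvPolynomial (Option V) K →ₐ[K] MvPolynomial V K :=
  aeval fun o => o.elim 0 X

lemma rename_killNone {q : MvPolynomial (Option V) K}
    (hq : q ∈ Submodule.span K (Set.range (X : Option V → MvPolynomial (Option V) K))) :
    rename (some : V → Option V) (killNone K V q)
      = q - coeffLin K (none : Option V) q • X none := by
  induction hq using Submodule.span_induction with
  | mem x hx =>
      obtain ⟨o, rfl⟩ := hx
      cases o with
      | none => simp [killNone, coeffLin, coeff_X']
      | some v =>
          simp only [killNone, coeffLin, aeval_X, Option.elim, rename_X,
            LinearMap.coe_mk, AddHom.coe_mk, coeff_X']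
          rw [if_neg (by simp [Finsupp.single_eq_single_iff]), zero_smul, sub_zero]
  | zero => simp
  | add x y hx hy ihx ihy =>
      simp only [map_add, ihx, ihy, add_smul]; ring
  | smul c x hx ih =>
      simp only [map_smul, ih, smul_sub, smul_smul, LinearMap.map_smul, smul_eq_mul]

end ConeAux

open SComplex in
/-- **Cone Lemma.** If `M_{vΣ} ⊆ K[vΣ]^1` is a subspace on
which the coefficient functional `e_v` is surjective, and
`M_Σ = i_v^{-1}(M_{vΣ})`, then `i_v` induces a (graded) ring isomorphism
`K[Σ]/(M_Σ) ≅ K[vΣ]/(M_{vΣ})`. -/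
theorem cone_lemma
    {V : Type*} [DecidableEq V] [Fintype V] (K : Type*) [Field K]
    (Δ : SComplex V) (M : Submodule K (MvPolynomial (Option V) K))
    (hM : M ≤ Submodule.span K (Set.range (X : Option V → MvPolynomial (Option V) K)))
    (hsurj : Function.Surjective ((coeffLin K (none : Option V)).comp M.subtype)) :
    ∃ e : (MvPolynomial V K ⧸
          (SRideal K Δ ⊔ Ideal.span
            ((Submodule.comap (rename (some : V → Option V)).toLinearMap M :
              Submodule K (MvPolynomial V K)) : Set (MvPolynomial V K)))) ≃+*
        (MvPolynomial (Option V) K ⧸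
          (SRideal K Δ.coneC ⊔ Ideal.span (M : Set (MvPolynomial (Option V) K)))),
      ∀ p : MvPolynomial V K,
        e (Ideal.Quotient.mk _ p) = Ideal.Quotient.mk _ (rename some p) := by
  classical
  set J : Ideal (MvPolynomial V K) :=
    SRideal K Δ ⊔ Ideal.span
      ((Submodule.comap (rename (some : V → Option V)).toLinearMap M :
        Submodule K (MvPolynomial V K)) : Set (MvPolynomial V K)) with hJdef
  set J' : Ideal (MvPolynomial (Option V) K) :=
    SRideal K Δ.coneC ⊔ Ideal.span (M : Set (MvPolynomial (Option V) K)) with hJ'def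
  obtain ⟨⟨m, hmM⟩, hm1⟩ := hsurj 1
  have hm1' : coeffLin K (none : Option V) m = 1 := hm1
  set p₀ : MvPolynomial V K := killNone K V m with hp₀def
  have hp₀ : rename (some : V → Option V) p₀ = m - X none := by
    rw [hp₀def, rename_killNone (hM hmM), hm1', one_smul]
  have hmJ' : m ∈ J' := Ideal.mem_sup_right (Ideal.subset_span hmM)
  -- the forward algebra map
  set φ₀ : MvPolynomial V K →ₐ[K] (MvPolynomial (Option V) K ⧸ J') :=
    (Ideal.Quotient.mkₐ K J').comp (rename some) with hφ₀def
  have hφ₀ : ∀ a ∈ J, φ₀ a = 0 := by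
    have hker : J ≤ RingHom.ker φ₀.toRingHom := by
      rw [hJdef]
      apply sup_le
      · rw [SRideal, Ideal.span_le]
        rintro p ⟨S, hS, rfl⟩
        rw [SetLike.mem_coe, RingHom.mem_ker]
        show Ideal.Quotient.mk J' (rename some (∏ v ∈ S, X v)) = 0
        have himg : rename (some : V → Option V) (∏ v ∈ S, X v)
            = ∏ w ∈ S.image some, (X w : MvPolynomial (Option V) K) := by
          rw [map_prod, Finset.prod_image fun a _ b _ h => Option.some_injective V h]
          simp [rename_X]
        rw [himg, Ideal.Quotient.eq_zero_iff_mem]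
        exact Ideal.mem_sup_left
          (Ideal.subset_span ⟨S.image some, fun h => hS (mem_of_coneC_image Δ h), rfl⟩)
      · rw [Ideal.span_le]
        intro q hq
        rw [SetLike.mem_coe] at hq
        rw [SetLike.mem_coe, RingHom.mem_ker]
        show Ideal.Quotient.mk J' (rename some q) = 0
        rw [Ideal.Quotient.eq_zero_iff_mem]
        exact Ideal.mem_sup_right (Ideal.subset_span hq)
    intro a ha
    exact RingHom.mem_ker.mp (hker ha)
  set φbar := Ideal.Quotient.liftₐ J φ₀ hφ₀ with hφbardef
  have hφ : ∀ p : MvPolynomial V K,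
      φbar (Ideal.Quotient.mk J p) = Ideal.Quotient.mk J' (rename some p) := by
    intro p
    rw [hφbardef, Ideal.Quotient.liftₐ_apply]
    rfl
  -- the reverse algebra map
  set f : Option V → (MvPolynomial V K ⧸ J) := fun o =>
    o.elim (Ideal.Quotient.mk J (-p₀)) (fun v => Ideal.Quotient.mk J (X v)) with hfdef
  set ψ₀ : MvPolynomial (Option V) K →ₐ[K] (MvPolynomial V K ⧸ J) := aeval f with hψ₀def
  have hrename : ∀ q : MvPolynomial V K,
      ψ₀ (rename some q) = Ideal.Quotient.mk J q := by
    intro q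
    rw [hψ₀def, aeval_rename]
    have h1 : f ∘ some = fun v => (Ideal.Quotient.mkₐ K J) (X v) := rfl
    rw [h1, ← comp_aeval]
    simp [aeval_X_left]
  have hprodT : ∀ T : Finset V, (∏ v ∈ T, f (some v)) =
      Ideal.Quotient.mk J (∏ v ∈ T, X v) := by
    intro T
    rw [map_prod]
    rfl
  have hψm : ψ₀ m = 0 := by
    have hm : m = X none + rename some p₀ := by rw [hp₀]; ring
    rw [hm, map_add, hrename]
    have : ψ₀ (X none) = Ideal.Quotient.mk J (-p₀) := by
      rw [hψ₀def, aeval_X]; rfl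
    rw [this, ← map_add]
    simp
  have hψ₀ : ∀ a ∈ J', ψ₀ a = 0 := by
    have hker : J' ≤ RingHom.ker ψ₀.toRingHom := by
      rw [hJ'def]
      apply sup_le
      · rw [SRideal, Ideal.span_le]
        rintro p ⟨S, hS, rfl⟩
        rw [SetLike.mem_coe, RingHom.mem_ker]
        show ψ₀ (∏ w ∈ S, X w) = 0
        rw [map_prod]
        have haev : ∀ w : Option V, ψ₀ (X w) = f w := fun w => by rw [hψ₀def, aeval_X]
        simp only [haev]
        by_cases hn : none ∈ S
        · obtain ⟨T, hT⟩ := exists_image_of_none_not_mem (Finset.notMem_erase none S)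
          have hTf : T ∉ Δ.faces := fun h => hS (by
            rw [← Finset.insert_erase hn, ← hT]
            exact coneC_insert_none_mem Δ h)
          rw [← Finset.mul_prod_erase S f hn, ← hT,
            Finset.prod_image fun a _ b _ h => Option.some_injective V h, hprodT]
          show Ideal.Quotient.mk J (-p₀) * _ = 0
          rw [← map_mul, Ideal.Quotient.eq_zero_iff_mem]
          exact Ideal.mul_mem_left _ _
            (Ideal.mem_sup_left (Ideal.subset_span ⟨T, hTf, rfl⟩))
        · obtain ⟨T, hT⟩ := exists_image_of_none_not_mem hn
          have hTf : T ∉ Δ.faces := fun h => hS (hT ▸ coneC_image_mem Δ h)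
          rw [← hT, Finset.prod_image fun a _ b _ h => Option.some_injective V h, hprodT,
            Ideal.Quotient.eq_zero_iff_mem]
          exact Ideal.mem_sup_left (Ideal.subset_span ⟨T, hTf, rfl⟩)
      · rw [Ideal.span_le]
        intro m' hm'
        rw [SetLike.mem_coe] at hm'
        rw [SetLike.mem_coe, RingHom.mem_ker]
        show ψ₀ m' = 0
        set c := coeffLin K (none : Option V) m' with hcdef
        have hmm : m' - c • m ∈ M := M.sub_mem hm' (M.smul_mem c hmM)
        have hc0 : coeffLin K (none : Option V) (m' - c • m) = 0 := by
          rw [map_sub, map_smul, hm1', ← hcdef, smul_eq_mul, mul_one, sub_self]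
        have hq : rename (some : V → Option V) (killNone K V (m' - c • m)) = m' - c • m := by
          rw [rename_killNone (hM hmm), hc0, zero_smul, sub_zero]
        have hqJ : killNone K V (m' - c • m) ∈ J := by
          refine Ideal.mem_sup_right (Ideal.subset_span ?_)
          rw [SetLike.mem_coe, Submodule.mem_comap]
          show rename (some : V → Option V) (killNone K V (m' - c • m)) ∈ M
          rw [hq]; exact hmm
        have hstep : ψ₀ (m' - c • m) = 0 := by
          rw [← hq, hrename, Ideal.Quotient.eq_zero_iff_mem]
          exact hqJ
        calc ψ₀ m' = ψ₀ ((m' - c • m) + c • m) := by rw [sub_add_cancel]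
          _ = ψ₀ (m' - c • m) + c • ψ₀ m := by rw [map_add, map_smul]
          _ = 0 := by rw [hstep, hψm, smul_zero, add_zero]
    intro a ha
    exact RingHom.mem_ker.mp (hker ha)
  set ψbar := Ideal.Quotient.liftₐ J' ψ₀ hψ₀ with hψbardef
  have hψ : ∀ p : MvPolynomial (Option V) K,
      ψbar (Ideal.Quotient.mk J' p) = ψ₀ p := by
    intro p
    rw [hψbardef, Ideal.Quotient.liftₐ_apply]
    rfl
  have h1 : φbar.comp ψbar = AlgHom.id K _ := by
    apply Ideal.Quotient.algHom_ext
    apply MvPolynomial.algHom_ext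
    intro o
    have hmk : ∀ p : MvPolynomial (Option V) K,
        (Ideal.Quotient.mkₐ K J') p = Ideal.Quotient.mk J' p := fun p => rfl
    cases o with
    | none =>
        rw [AlgHom.comp_apply, AlgHom.comp_apply, hmk, hψ]
        have : ψ₀ (X none) = Ideal.Quotient.mk J (-p₀) := by rw [hψ₀def, aeval_X]; rfl
        rw [this, hφ, map_neg, hp₀, neg_sub, map_sub]
        have hm0 : Ideal.Quotient.mk J' m = 0 := by
          rw [Ideal.Quotient.eq_zero_iff_mem]; exact hmJ'
        rw [hm0, sub_zero]
        rfl
    | some v =>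
        rw [AlgHom.comp_apply, AlgHom.comp_apply, hmk, hψ]
        have : ψ₀ (X (some v)) = Ideal.Quotient.mk J (X v) := by rw [hψ₀def, aeval_X]; rfl
        rw [this, hφ, rename_X]
        rfl
  have h2 : ψbar.comp φbar = AlgHom.id K _ := by
    apply Ideal.Quotient.algHom_ext
    apply MvPolynomial.algHom_ext
    intro v
    have hmk : ∀ p : MvPolynomial V K,
        (Ideal.Quotient.mkₐ K J) p = Ideal.Quotient.mk J p := fun p => rfl
    rw [AlgHom.comp_apply, AlgHom.comp_apply, hmk, hφ, hψ, rename_X]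
    have : ψ₀ (X (some v)) = Ideal.Quotient.mk J (X v) := by rw [hψ₀def, aeval_X]; rfl
    rw [this]
    rfl
  exact ⟨(AlgEquiv.ofAlgHom φbar ψbar h1 h2).toRingEquiv, fun p => hφ p⟩
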